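/- Let P and Q be joint distributions of a pair (X, Y) on a finite set S × S with |S| = K ≥ 2, having equal marginals on X. If the total variation-type L1 distance ‖P − Q‖₁ = ε ≤ 2/e, then |I_P(X;Y) − I_Q(X;Y)| ≤ 3ε·log K + 2·h(ε/2), where h(p) = −p·log p − (1−p)·log(1−p) is the binary entropy function. -/

import Mathlib

open Real

noncomputable def shEnt {α : Type*} [Fintype α] (p : α → ℝ) : ℝ :=
  ∑ x, Real.negMulLog (p x)

noncomputable def margX {α β : Type*} [Fintype β] (p : α → β → ℝ) (x : α) : ℝ :=
  ∑ y, p x y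

noncomputable def margY {α β : Type*} [Fintype α] (p : α → β → ℝ) (y : β) : ℝ :=
  ∑ x, p x y

noncomputable def jointEnt {α β : Type*} [Fintype α] [Fintype β] (p : α → β → ℝ) : ℝ :=
  ∑ x, ∑ y, Real.negMulLog (p x y)

noncomputable def mutInf {α β : Type*} [Fintype α] [Fintype β] (p : α → β → ℝ) : ℝ :=
  shEnt (margX p) + shEnt (margY p) - jointEnt p

/-- Binary entropy function (in nats). -/
noncomputable def binEnt (p : ℝ) : ℝ := -p * Real.log p - (1 - p) * Real.log (1 - p)

section Helpers
open Real Finset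


lemma negMulLog_add_le {a b : ℝ} (ha : 0 ≤ a) (hb : 0 ≤ b) :
    Real.negMulLog (a + b) ≤ Real.negMulLog a + Real.negMulLog b := by
  unfold Real.negMulLog
  have h1 : -a * Real.log (a + b) ≤ -a * Real.log a := by
    rcases eq_or_lt_of_le ha with h | h
    · simp [← h]
    · have : Real.log a ≤ Real.log (a + b) := Real.log_le_log h (by linarith)
      nlinarith
  have h2 : -b * Real.log (a + b) ≤ -b * Real.log b := by
    rcases eq_or_lt_of_le hb with h | h
    · simp [← h]
    · have : Real.log b ≤ Real.log (a + b) := Real.log_le_log h (by linarith)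
      nlinarith
  nlinarith

lemma sum_negMulLog_le_log_card {α : Type*} [Fintype α] (p : α → ℝ)
    (hp : ∀ i, 0 ≤ p i) (hps : ∑ i, p i = 1) :
    ∑ i, Real.negMulLog (p i) ≤ Real.log (Fintype.card α) := by
  have hne : Nonempty α := by
    by_contra h
    rw [not_nonempty_iff] at h
    rw [Finset.sum_eq_zero (fun i _ => (h.elim i))] at hps
    norm_num at hps
  have hcard : (0 : ℝ) < (Fintype.card α : ℝ) := by
    exact_mod_cast Fintype.card_pos
  set n : ℝ := (Fintype.card α : ℝ) with hn
  have key : ∀ i, Real.negMulLog (p i) ≤ p i * Real.log n + (1 / n - p i) := by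
    intro i
    rcases eq_or_lt_of_le (hp i) with h0 | h0
    · rw [← h0]; simp; positivity
    · have hnp : (0 : ℝ) < n * p i := by positivity
      have hlog := Real.log_le_sub_one_of_pos (x := (n * p i)⁻¹) (by positivity)
      rw [Real.log_inv] at hlog
      have hsplit : Real.log (n * p i) = Real.log n + Real.log (p i) :=
        Real.log_mul (ne_of_gt hcard) (ne_of_gt h0)
      have h1 : p i * (-(Real.log n + Real.log (p i))) ≤ p i * ((n * p i)⁻¹ - 1) := by
        apply mul_le_mul_of_nonneg_left _ h0.le
        rw [← hsplit]; linarith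
      have h2 : p i * ((n * p i)⁻¹ - 1) = 1 / n - p i := by
        field_simp
      rw [h2] at h1
      unfold Real.negMulLog
      nlinarith
  calc ∑ i, Real.negMulLog (p i) ≤ ∑ i, (p i * Real.log n + (1 / n - p i)) :=
        Finset.sum_le_sum (fun i _ => key i)
    _ = Real.log n := by
        rw [Finset.sum_add_distrib, Finset.sum_sub_distrib, ← Finset.sum_mul, hps]
        simp [Finset.card_univ, hn]

lemma binEnt_eq (p : ℝ) : binEnt p = Real.negMulLog p + Real.negMulLog (1 - p) := by
  unfold binEnt Real.negMulLog; ring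

lemma binEnt_hasDeriv {x : ℝ} (hx : 0 < x) (hx1 : x < 1) :
    HasDerivAt binEnt (Real.log (1 - x) - Real.log x) x := by
  have hb : binEnt = fun p => Real.negMulLog p + Real.negMulLog (1 - p) := funext binEnt_eq
  rw [hb]
  have h1 := Real.hasDerivAt_negMulLog (ne_of_gt hx)
  have hcomp : HasDerivAt (fun p : ℝ => 1 - p) (-1) x := by
    simpa using (hasDerivAt_id x).const_sub 1
  have h2 : HasDerivAt (fun p : ℝ => Real.negMulLog (1 - p))
      ((-Real.log (1 - x) - 1) * (-1)) x :=
    (Real.hasDerivAt_negMulLog (by intro h; linarith [h ▸ (by linarith : (0:ℝ) < 1 - x)])).comp x hcomp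
  have := h1.add h2
  refine this.congr_deriv ?_
  ring

lemma binEnt_mono : MonotoneOn binEnt (Set.Icc 0 (1/2 : ℝ)) := by
  have hcont : ContinuousOn binEnt (Set.Icc 0 (1/2 : ℝ)) := by
    have hb : binEnt = fun p => Real.negMulLog p + Real.negMulLog (1 - p) := funext binEnt_eq
    rw [hb]
    exact (Real.continuous_negMulLog.add
      (Real.continuous_negMulLog.comp (continuous_const.sub continuous_id))).continuousOn
  apply monotoneOn_of_deriv_nonneg (convex_Icc _ _) hcont
  · intro x hx
    rw [interior_Icc] at hx
    exact ((binEnt_hasDeriv hx.1 (by linarith [hx.2])).differentiableAt).differentiableWithinAt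
  · intro x hx
    rw [interior_Icc] at hx
    rw [(binEnt_hasDeriv hx.1 (by linarith [hx.2])).deriv]
    have : Real.log x ≤ Real.log (1 - x) := Real.log_le_log hx.1 (by linarith [hx.2])
    linarith

@[simp] lemma binEnt_zero : binEnt 0 = 0 := by simp [binEnt]

lemma shEnt_sub_le {α : Type*} [Fintype α] (p q : α → ℝ)
    (hp : ∀ i, 0 ≤ p i) (hq : ∀ i, 0 ≤ q i)
    (hps : ∑ i, p i = 1) (hqs : ∑ i, q i = 1)
    (T : ℝ) (hT : ∑ i, |p i - q i| = 2 * T) (hT1 : T < 1) :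
    shEnt p - shEnt q ≤ T * Real.log (Fintype.card α) + binEnt T := by
  have hT0 : 0 ≤ T := by
    have : (0:ℝ) ≤ ∑ i, |p i - q i| := Finset.sum_nonneg fun i _ => abs_nonneg _
    linarith
  rcases eq_or_lt_of_le hT0 with h0 | h0
  · -- T = 0 : p = q
    have hpq : ∀ i, p i = q i := by
      intro i
      have h := (Finset.sum_eq_zero_iff_of_nonneg
        (fun i _ => abs_nonneg (p i - q i))).mp (by rw [hT, ← h0]; ring) i (Finset.mem_univ i)
      have := abs_eq_zero.mp h
      linarith
    have : shEnt p = shEnt q := by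
      unfold shEnt; exact Finset.sum_congr rfl fun i _ => by rw [hpq i]
    rw [this, ← h0]
    simp
  · -- 0 < T
    have h1T : 0 < 1 - T := by linarith
    set m : α → ℝ := fun i => min (p i) (q i) with hm
    set u : α → ℝ := fun i => max (p i - q i) 0 / T with hu
    set w : α → ℝ := fun i => max (q i - p i) 0 / T with hw
    set z : α → ℝ := fun i => m i / (1 - T) with hz
    have habs : ∀ x : ℝ, max x 0 = (x + |x|) / 2 := by
      intro x; rcases le_or_gt 0 x with h | h
      · rw [max_eq_left h, abs_of_nonneg h]; ring
      · rw [max_eq_right h.le, abs_of_neg h]; ring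
    have hsumpq : ∑ i, (p i - q i) = 0 := by
      rw [Finset.sum_sub_distrib, hps, hqs]; ring
    have hA : ∑ i, max (p i - q i) 0 = T := by
      have : ∑ i, max (p i - q i) 0 = ∑ i, ((p i - q i) + |p i - q i|) / 2 :=
        Finset.sum_congr rfl fun i _ => habs _
      rw [this]
      rw [show (fun i => ((p i - q i) + |p i - q i|) / 2) = fun i => ((p i - q i) / 2 + |p i - q i| / 2) from funext fun i => by ring]
      rw [Finset.sum_add_distrib, ← Finset.sum_div, ← Finset.sum_div, hsumpq, hT]
      ring
    have hB : ∑ i, max (q i - p i) 0 = T := by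
      have h1 : ∑ i, (q i - p i) = 0 := by rw [Finset.sum_sub_distrib, hps, hqs]; ring
      have h2 : ∑ i, |q i - p i| = 2 * T := by
        rw [← hT]; exact Finset.sum_congr rfl fun i _ => abs_sub_comm _ _
      have : ∑ i, max (q i - p i) 0 = ∑ i, ((q i - p i) + |q i - p i|) / 2 :=
        Finset.sum_congr rfl fun i _ => habs _
      rw [this]
      rw [show (fun i => ((q i - p i) + |q i - p i|) / 2) = fun i => ((q i - p i) / 2 + |q i - p i| / 2) from funext fun i => by ring]
      rw [Finset.sum_add_distrib, ← Finset.sum_div, ← Finset.sum_div, h1, h2]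
      ring
    have hpd : ∀ i, p i = m i + max (p i - q i) 0 := by
      intro i; rcases le_total (p i) (q i) with h | h
      · rw [hm]; simp [min_eq_left h, max_eq_right (by linarith : p i - q i ≤ 0)]
      · rw [hm]; simp [min_eq_right h, max_eq_left (by linarith : 0 ≤ p i - q i)]
    have hqd : ∀ i, q i = m i + max (q i - p i) 0 := by
      intro i; rcases le_total (p i) (q i) with h | h
      · rw [hm]; simp [min_eq_left h, max_eq_left (by linarith : 0 ≤ q i - p i)]
      · rw [hm]; simp [min_eq_right h, max_eq_right (by linarith : q i - p i ≤ 0)]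
    have hm0 : ∀ i, 0 ≤ m i := fun i => le_min (hp i) (hq i)
    have hmsum : ∑ i, m i = 1 - T := by
      have : ∑ i, m i = ∑ i, (p i - max (p i - q i) 0) :=
        Finset.sum_congr rfl fun i _ => by linarith [hpd i]
      rw [this, Finset.sum_sub_distrib, hps, hA]
    have hu0 : ∀ i, 0 ≤ u i := fun i => div_nonneg (le_max_right _ _) hT0
    have husum : ∑ i, u i = 1 := by
      rw [hu]; rw [← Finset.sum_div, hA]; field_simp
    have hw0 : ∀ i, 0 ≤ w i := fun i => div_nonneg (le_max_right _ _) hT0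
    have hwsum : ∑ i, w i = 1 := by
      rw [hw]; rw [← Finset.sum_div, hB]; field_simp
    have hz0 : ∀ i, 0 ≤ z i := fun i => div_nonneg (hm0 i) h1T.le
    have hzsum : ∑ i, z i = 1 := by
      rw [hz]; rw [← Finset.sum_div, hmsum]; field_simp
    -- upper bound on shEnt p
    have step1 : shEnt p ≤ ∑ i, Real.negMulLog (m i) + ∑ i, Real.negMulLog (max (p i - q i) 0) := by
      rw [← Finset.sum_add_distrib]
      apply Finset.sum_le_sum
      intro i _
      have h := negMulLog_add_le (hm0 i) (le_max_right (p i - q i) 0)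
      rwa [← hpd i] at h
    have step2 : ∑ i, Real.negMulLog (max (p i - q i) 0)
        ≤ Real.negMulLog T + T * Real.log (Fintype.card α) := by
      have heq : ∀ i, Real.negMulLog (max (p i - q i) 0)
          = u i * Real.negMulLog T + T * Real.negMulLog (u i) := by
        intro i
        have : max (p i - q i) 0 = T * u i := by rw [hu]; field_simp
        rw [this, Real.negMulLog_mul]
      rw [Finset.sum_congr rfl fun i _ => heq i, Finset.sum_add_distrib,
        ← Finset.sum_mul, husum, ← Finset.mul_sum]
      have := sum_negMulLog_le_log_card u hu0 husum
      nlinarith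
    have step3 : ∑ i, Real.negMulLog (m i)
        = Real.negMulLog (1 - T) + (1 - T) * ∑ i, Real.negMulLog (z i) := by
      have heq : ∀ i, Real.negMulLog (m i)
          = z i * Real.negMulLog (1 - T) + (1 - T) * Real.negMulLog (z i) := by
        intro i
        have : m i = (1 - T) * z i := by rw [hz]; field_simp
        rw [this, Real.negMulLog_mul]
      rw [Finset.sum_congr rfl fun i _ => heq i, Finset.sum_add_distrib,
        ← Finset.sum_mul, hzsum, ← Finset.mul_sum]
      ring
    -- lower bound on shEnt q
    have step4 : (1 - T) * ∑ i, Real.negMulLog (z i) ≤ shEnt q := by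
      have hconc : ∀ i, (1 - T) * Real.negMulLog (z i) + T * Real.negMulLog (w i)
          ≤ Real.negMulLog (q i) := by
        intro i
        have hqi : q i = (1 - T) * z i + T * w i := by
          rw [hqd i, hz, hw]; field_simp
        rw [hqi]
        have := Real.concaveOn_negMulLog.2 (Set.mem_Ici.mpr (hz0 i)) (Set.mem_Ici.mpr (hw0 i))
          h1T.le hT0 (by ring)
        simpa [smul_eq_mul] using this
      have hwnn : ∀ i, 0 ≤ Real.negMulLog (w i) := by
        intro i
        apply Real.negMulLog_nonneg (hw0 i)
        calc w i ≤ ∑ j, w j := Finset.single_le_sum (fun j _ => hw0 j) (Finset.mem_univ i)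
          _ = 1 := hwsum
      calc (1 - T) * ∑ i, Real.negMulLog (z i)
          ≤ (1 - T) * ∑ i, Real.negMulLog (z i) + T * ∑ i, Real.negMulLog (w i) := by
            have : 0 ≤ ∑ i, Real.negMulLog (w i) := Finset.sum_nonneg fun i _ => hwnn i
            nlinarith
        _ = ∑ i, ((1 - T) * Real.negMulLog (z i) + T * Real.negMulLog (w i)) := by
            rw [Finset.sum_add_distrib, ← Finset.mul_sum, ← Finset.mul_sum]
        _ ≤ ∑ i, Real.negMulLog (q i) := Finset.sum_le_sum fun i _ => hconc i
        _ = shEnt q := rfl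
    have hbe : binEnt T = Real.negMulLog T + Real.negMulLog (1 - T) := binEnt_eq T
    linarith [step1, step2, step3, step4]

end Helpers

/-- Continuity of mutual information (Csiszár–Körner type): if `P` and `Q` are joint
distributions on `S × S` with `|S| = K ≥ 2`, equal `X`-marginals, and L1 distance
`ε ≤ 2/e`, then `|I_P(X;Y) − I_Q(X;Y)| ≤ 3ε·log K + 2·h(ε/2)`. -/
theorem mutual_information_continuity
    {S : Type*} [Fintype S] (K : ℕ) (hK : 2 ≤ K) (hcard : Fintype.card S = K)
    (P Q : S → S → ℝ)
    (hPpos : ∀ x y, 0 ≤ P x y) (hQpos : ∀ x y, 0 ≤ Q x y)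
    (hPsum : ∑ x, ∑ y, P x y = 1) (hQsum : ∑ x, ∑ y, Q x y = 1)
    (hmarg : ∀ x, margX P x = margX Q x)
    (ε : ℝ) (hε : ε = ∑ x, ∑ y, |P x y - Q x y|) (hεsmall : ε ≤ 2 / Real.exp 1) :
    |mutInf P - mutInf Q| ≤ 3 * ε * Real.log K + 2 * binEnt (ε / 2) := by
  have hε0 : 0 ≤ ε := by
    rw [hε]
    exact Finset.sum_nonneg fun x _ => Finset.sum_nonneg fun y _ => abs_nonneg _
  have he2 : (2:ℝ) ≤ Real.exp 1 := by
    have := Real.add_one_le_exp 1; linarith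
  have hε1 : ε ≤ 1 := by
    refine le_trans hεsmall ?_
    rw [div_le_one (by positivity)]
    exact he2
  have hK1 : (1:ℝ) ≤ (K:ℝ) := by exact_mod_cast Nat.one_le_of_lt hK
  have hlogK : 0 ≤ Real.log K := Real.log_nonneg hK1
  -- X marginals are equal
  have hX : shEnt (margX P) = shEnt (margX Q) := by
    unfold shEnt
    exact Finset.sum_congr rfl fun x _ => by rw [hmarg x]
  -- Y-marginal part
  have hpY0 : ∀ y, 0 ≤ margY P y := fun y => Finset.sum_nonneg fun x _ => hPpos x y
  have hqY0 : ∀ y, 0 ≤ margY Q y := fun y => Finset.sum_nonneg fun x _ => hQpos x y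
  have hpYs : ∑ y, margY P y = 1 := by
    unfold margY; rw [Finset.sum_comm]; exact hPsum
  have hqYs : ∑ y, margY Q y = 1 := by
    unfold margY; rw [Finset.sum_comm]; exact hQsum
  set εY := ∑ y, |margY P y - margY Q y| with hεY
  have hεY0 : 0 ≤ εY := Finset.sum_nonneg fun y _ => abs_nonneg _
  have hεYε : εY ≤ ε := by
    rw [hε, hεY]
    calc ∑ y, |margY P y - margY Q y| ≤ ∑ y, ∑ x, |P x y - Q x y| := by
          apply Finset.sum_le_sum
          intro y _
          have : margY P y - margY Q y = ∑ x, (P x y - Q x y) := by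
            unfold margY; rw [Finset.sum_sub_distrib]
          rw [this]
          exact Finset.abs_sum_le_sum_abs _ _
      _ = ∑ x, ∑ y, |P x y - Q x y| := Finset.sum_comm
  have hεYrev : ∑ y, |margY Q y - margY P y| = 2 * (εY / 2) := by
    rw [Finset.sum_congr rfl fun y _ => abs_sub_comm (margY Q y) (margY P y), ← hεY]
    ring
  have hTY1 : εY / 2 < 1 := by linarith
  have hY1 := shEnt_sub_le (margY P) (margY Q) hpY0 hqY0 hpYs hqYs (εY / 2)
    (by rw [← hεY]; ring) hTY1
  have hY2 := shEnt_sub_le (margY Q) (margY P) hqY0 hpY0 hqYs hpYs (εY / 2) hεYrev hTY1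
  have habsY : |shEnt (margY P) - shEnt (margY Q)|
      ≤ (εY / 2) * Real.log K + binEnt (εY / 2) := by
    rw [← hcard]
    exact abs_sub_le_iff.mpr ⟨hY1, hY2⟩
  have hbmono : binEnt (εY / 2) ≤ binEnt (ε / 2) := by
    apply binEnt_mono ⟨by linarith, by linarith⟩ ⟨by linarith, by linarith⟩
    linarith
  have habsY' : |shEnt (margY P) - shEnt (margY Q)|
      ≤ (ε / 2) * Real.log K + binEnt (ε / 2) := by
    have h1 : (εY / 2) * Real.log K ≤ (ε / 2) * Real.log K := by
      apply mul_le_mul_of_nonneg_right _ hlogK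
      linarith
    linarith
  -- joint part
  have hJP : shEnt (fun z : S × S => P z.1 z.2) = jointEnt P := by
    unfold shEnt jointEnt
    rw [Fintype.sum_prod_type]
  have hJQ : shEnt (fun z : S × S => Q z.1 z.2) = jointEnt Q := by
    unfold shEnt jointEnt
    rw [Fintype.sum_prod_type]
  have hPJ0 : ∀ z : S × S, 0 ≤ P z.1 z.2 := fun z => hPpos z.1 z.2
  have hQJ0 : ∀ z : S × S, 0 ≤ Q z.1 z.2 := fun z => hQpos z.1 z.2
  have hPJs : ∑ z : S × S, P z.1 z.2 = 1 := by rw [Fintype.sum_prod_type]; exact hPsum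
  have hQJs : ∑ z : S × S, Q z.1 z.2 = 1 := by rw [Fintype.sum_prod_type]; exact hQsum
  have hεJ : ∑ z : S × S, |P z.1 z.2 - Q z.1 z.2| = 2 * (ε / 2) := by
    rw [Fintype.sum_prod_type, ← hε]; ring
  have hεJrev : ∑ z : S × S, |Q z.1 z.2 - P z.1 z.2| = 2 * (ε / 2) := by
    rw [Finset.sum_congr rfl fun z _ => abs_sub_comm (Q z.1 z.2) (P z.1 z.2)]
    exact hεJ
  have hTJ1 : ε / 2 < 1 := by linarith
  have hcardJ : (Fintype.card (S × S) : ℝ) = (K : ℝ) * (K : ℝ) := by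
    rw [Fintype.card_prod, hcard]; push_cast; ring
  have hlogJ : Real.log (Fintype.card (S × S)) = 2 * Real.log K := by
    rw [hcardJ, Real.log_mul (by linarith) (by linarith)]
    ring
  have hJ1 := shEnt_sub_le (fun z : S × S => P z.1 z.2) (fun z : S × S => Q z.1 z.2)
    hPJ0 hQJ0 hPJs hQJs (ε / 2) hεJ hTJ1
  have hJ2 := shEnt_sub_le (fun z : S × S => Q z.1 z.2) (fun z : S × S => P z.1 z.2)
    hQJ0 hPJ0 hQJs hPJs (ε / 2) hεJrev hTJ1
  rw [hJP, hJQ, hlogJ] at hJ1 hJ2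
  have habsJ : |jointEnt P - jointEnt Q|
      ≤ (ε / 2) * (2 * Real.log K) + binEnt (ε / 2) :=
    abs_sub_le_iff.mpr ⟨hJ1, hJ2⟩
  -- combine
  have hdecomp : mutInf P - mutInf Q
      = (shEnt (margY P) - shEnt (margY Q)) - (jointEnt P - jointEnt Q) := by
    unfold mutInf
    rw [hX]; ring
  have hεlogK : 0 ≤ ε * Real.log K := mul_nonneg hε0 hlogK
  calc |mutInf P - mutInf Q|
      = |(shEnt (margY P) - shEnt (margY Q)) - (jointEnt P - jointEnt Q)| := by rw [hdecomp]
    _ ≤ |shEnt (margY P) - shEnt (margY Q)| + |jointEnt P - jointEnt Q| := by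
        rw [sub_eq_add_neg]
        exact (abs_add_le _ _).trans (by rw [abs_neg])
    _ ≤ ((ε / 2) * Real.log K + binEnt (ε / 2))
        + ((ε / 2) * (2 * Real.log K) + binEnt (ε / 2)) := add_le_add habsY' habsJ
    _ ≤ 3 * ε * Real.log K + 2 * binEnt (ε / 2) := by nlinarith
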